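/- Let L be an algebraically closed field, let G ∈ L[X,Y] be an irreducible polynomial with G(0,0) = 0 and ∂G/∂Y(0,0) ≠ 0, and let η ∈ L⟦T⟧ be a formal power series with zero constant term such that G(T, η(T)) = 0 in L⟦T⟧. Then for every polynomial F ∈ L[X,Y], the power series F(T, η(T)) is identically zero if and only if G divides F in L[X,Y]. -/

import Mathlib

open Polynomial

noncomputable def myE1 (L : Type*) [Field L] : MvPolynomial (Fin 1) L ≃ₐ[L] Polynomial L :=
  (MvPolynomial.renameEquiv L (Equiv.equivPUnit.{1, 1} (Fin 1))).trans (MvPolynomial.pUnitAlgEquiv L)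

noncomputable def myE (L : Type*) [Field L] :
    MvPolynomial (Fin 2) L ≃ₐ[L] Polynomial (Polynomial L) :=
  (MvPolynomial.renameEquiv L (Equiv.swap 0 1)).trans
    ((MvPolynomial.finSuccEquiv L 1).trans (Polynomial.mapAlgEquiv (myE1 L)))

theorem myE_X0 (L : Type*) [Field L] : (myE L) (MvPolynomial.X 0) = Polynomial.C Polynomial.X := by
  rw [myE, AlgEquiv.trans_apply, AlgEquiv.trans_apply, MvPolynomial.renameEquiv_apply,
    MvPolynomial.rename_X, show ((Equiv.swap (0:Fin 2) 1) 0) = Fin.succ 0 from rfl,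
    MvPolynomial.finSuccEquiv_X_succ]
  simp [myE1]

theorem myE_X1 (L : Type*) [Field L] : (myE L) (MvPolynomial.X 1) = Polynomial.X := by
  simp [myE, myE1, show ((Equiv.swap (0:Fin 2) 1) 1) = 0 from rfl,
    MvPolynomial.finSuccEquiv_X_zero]

theorem myE_C (L : Type*) [Field L] (a : L) :
    (myE L) (MvPolynomial.C a) = Polynomial.C (Polynomial.C a) := by
  rw [← MvPolynomial.algebraMap_eq, AlgEquiv.commutes]
  simp [Polynomial.algebraMap_apply, Polynomial.algebraMap_eq]

-- key compatibility lemma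
theorem myKey {L : Type*} [Field L] (η : PowerSeries L) (P : MvPolynomial (Fin 2) L) :
    Polynomial.eval₂ (Polynomial.coeToPowerSeries.ringHom) η ((myE L) P) =
      MvPolynomial.aeval ![PowerSeries.X, η] P := by
  have hhom : (Polynomial.eval₂RingHom (Polynomial.coeToPowerSeries.ringHom) η).comp
        (myE L).toAlgHom.toRingHom =
      ((MvPolynomial.aeval ![PowerSeries.X, η] :
        MvPolynomial (Fin 2) L →ₐ[L] PowerSeries L) : MvPolynomial (Fin 2) L →+* PowerSeries L) := by
    apply MvPolynomial.ringHom_ext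
    · intro a
      simp [myE_C, Polynomial.coeToPowerSeries.ringHom_apply, Polynomial.coe_C,
        PowerSeries.algebraMap_apply]
    · intro i
      fin_cases i
      · simp [myE_X0, Polynomial.coeToPowerSeries.ringHom_apply, Polynomial.coe_X]
      · simp [myE_X1]
  have := RingHom.congr_fun hhom P
  simpa using this

set_option maxHeartbeats 1000000 in
/-- Let `L` be an algebraically closed field, `G ∈ L[X,Y]` an irreducible
polynomial with `G(0,0) = 0` and `∂G/∂Y(0,0) ≠ 0`, and `η ∈ L⟦T⟧` a formal power series with
zero constant term such that `G(T, η(T)) = 0`.  Then for every `F ∈ L[X,Y]`, the power series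
`F(T, η(T))` is identically zero iff `G` divides `F` in `L[X,Y]`. -/
theorem power_series_branch_vanishing_iff_divisible
    {L : Type*} [Field L] [IsAlgClosed L]
    (G : MvPolynomial (Fin 2) L) (hGirr : Irreducible G)
    (hG0 : MvPolynomial.eval (fun _ => (0 : L)) G = 0)
    (hGY : MvPolynomial.eval (fun _ => (0 : L)) (MvPolynomial.pderiv 1 G) ≠ 0)
    (η : PowerSeries L) (hη : PowerSeries.constantCoeff η = 0)
    (hGη : MvPolynomial.aeval ![PowerSeries.X, η] G = 0)
    (F : MvPolynomial (Fin 2) L) :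
    MvPolynomial.aeval ![PowerSeries.X, η] F = 0 ↔ G ∣ F := by
  classical
  constructor
  swap
  · rintro ⟨H, rfl⟩
    rw [map_mul, hGη, zero_mul]
  intro hFη
  set θ : Polynomial L →+* PowerSeries L := Polynomial.coeToPowerSeries.ringHom with hθdef
  have hθinj : Function.Injective θ := by
    intro a b hab
    rw [hθdef, Polynomial.coeToPowerSeries.ringHom_apply,
      Polynomial.coeToPowerSeries.ringHom_apply] at hab
    exact Polynomial.coe_injective L hab
  set e := myE L with hedef
  set g := e G with hgdef
  set f := e F with hfdef
  have hg : Polynomial.eval₂ θ η g = 0 := by rw [hgdef, hedef, myKey]; exact hGη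
  have hf : Polynomial.eval₂ θ η f = 0 := by rw [hfdef, hedef, myKey]; exact hFη
  have hgirr : Irreducible g := (MulEquiv.irreducible_iff e).mpr hGirr
  have hgne : g ≠ 0 := hgirr.ne_zero
  -- positive degree in Y
  have hdeg : g.natDegree ≠ 0 := by
    intro h0
    have hC := Polynomial.eq_C_of_natDegree_eq_zero h0
    rw [hC, Polynomial.eval₂_C] at hg
    have : g.coeff 0 = 0 := hθinj (by simpa using hg)
    exact hgne (by rw [hC, this, map_zero])
  -- primitivity of g
  have hprim : g.IsPrimitive := by
    intro r hr
    obtain ⟨h, hh⟩ := hr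
    rcases hgirr.isUnit_or_isUnit hh with hu | hu
    · exact Polynomial.isUnit_C.mp hu
    · exfalso
      apply hdeg
      have h1 : h.natDegree = 0 := Polynomial.natDegree_eq_zero_of_isUnit hu
      have h2 := Polynomial.natDegree_mul_le (p := Polynomial.C r) (q := h)
      rw [← hh] at h2
      simp [h1] at h2
      exact h2
  -- move to the fraction field
  letI : NormalizedGCDMonoid (Polynomial L) := inferInstance
  set φK := algebraMap (Polynomial L) (RatFunc L) with hφKdef
  have hgirr' : Irreducible (g.map φK) :=
    (hprim.irreducible_iff_irreducible_map_fraction_map (K := RatFunc L)).mp hgirr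
  by_cases hf0 : f = 0
  · have hF0 : F = 0 := e.injective (by rw [← hfdef, hf0, map_zero])
    rw [hF0]
    exact dvd_zero G
  -- primitive part of f
  set q := f.primPart with hqdef
  have hq : Polynomial.eval₂ θ η q = 0 :=
    Polynomial.eval₂_primPart_eq_zero hθinj hf0 hf
  -- the Laurent series evaluation
  set χ : Polynomial L →+* LaurentSeries L := (HahnSeries.ofPowerSeries ℤ L).comp θ with hχdef
  have hχinj : Function.Injective χ := by
    rw [hχdef, RingHom.coe_comp]
    exact HahnSeries.ofPowerSeries_injective.comp hθinj
  set ι0 : RatFunc L →+* LaurentSeries L := IsFractionRing.lift hχinj with hι0def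
  have hcomp : ι0.comp φK = χ := by
    refine RingHom.ext fun x => ?_
    rw [hι0def, hφKdef, RingHom.comp_apply, IsFractionRing.lift_algebraMap]
  set η' : LaurentSeries L := HahnSeries.ofPowerSeries ℤ L η with hη'def
  have hEval : ∀ p : Polynomial (Polynomial L), Polynomial.eval₂ θ η p = 0 →
      Polynomial.eval₂ ι0 η' (p.map φK) = 0 := by
    intro p hp
    rw [Polynomial.eval₂_map, hcomp, hχdef, hη'def]
    have := Polynomial.hom_eval₂ p θ (HahnSeries.ofPowerSeries ℤ L) η
    rw [← this, hp, map_zero]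
  have hEg : Polynomial.eval₂ ι0 η' (g.map φK) = 0 := hEval g hg
  have hEq : Polynomial.eval₂ ι0 η' (q.map φK) = 0 := hEval q hq
  -- g.map φK divides q.map φK
  have hdvd' : g.map φK ∣ q.map φK := by
    by_contra hnd
    obtain ⟨a, b, hab⟩ := (hgirr'.coprime_iff_not_dvd).mpr hnd
    have h1 := congrArg (Polynomial.eval₂RingHom ι0 η') hab
    simp only [map_add, map_mul, map_one, Polynomial.coe_eval₂RingHom, hEg, hEq,
      mul_zero, add_zero, zero_add] at h1
    exact one_ne_zero (α := LaurentSeries L) h1.symm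
  -- descend
  have hgq : g ∣ q :=
    hprim.dvd_of_fraction_map_dvd_fraction_map hdvd'
  have hgf : g ∣ f := hgq.trans f.primPart_dvd
  have hfin := map_dvd (e.symm) hgf
  rw [hgdef, hfdef] at hfin
  simpa using hfin
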